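/- Let x be a nilpotent endomorphism of a 2n-dimensional symplectic vector space V whose Jordan type is of the form λ ∪ λ (each part repeated twice), and let F₁ = ℂv₁ with v₁ ∈ ker(x), v₁ ≠ 0. Let m̄ be maximal with λ_{m̄} equal to the largest j such that v₁ ∈ im(x^{j-1}). Then the Jordan type of the induced endomorphism of F₁^⊥/F₁ is λ' ∪ λ', where λ' is obtained from λ by decreasing λ_{m̄} by 1. -/

import Mathlib

-- aux 2: finrank of comap of subtype
lemma finrank_comap_subtype' {K M : Type*} [Field K] [AddCommGroup M] [Module K M]
    [FiniteDimensional K M] (P S : Submodule K M) :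
    Module.finrank K (S.comap P.subtype) = Module.finrank K ↥(S ⊓ P) := by
  have h1 : S.comap P.subtype = (S ⊓ P).comap P.subtype := by
    ext p; simp [p.2]
  rw [h1]
  exact (Submodule.comapSubtypeEquivOfLe (inf_le_right : S ⊓ P ≤ P)).finrank_eq

-- aux 1: finrank of kernel of mapQ
lemma finrank_ker_mapQ' {K M : Type*} [Field K] [AddCommGroup M] [Module K M]
    [FiniteDimensional K M] (L : Submodule K M) (g : M →ₗ[K] M) (hg : L ≤ L.comap g) :
    Module.finrank K (LinearMap.ker (Submodule.mapQ L L g hg)) + Module.finrank K L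
      = Module.finrank K (L.comap g) := by
  set φ : (L.comap g) →ₗ[K] (M ⧸ L) := L.mkQ.comp (L.comap g).subtype with hφ
  have hrange : LinearMap.range φ = LinearMap.ker (Submodule.mapQ L L g hg) := by
    ext z
    constructor
    · rintro ⟨⟨v, hv⟩, rfl⟩
      simp only [LinearMap.mem_ker, hφ, LinearMap.comp_apply, Submodule.coe_subtype,
        Submodule.mkQ_apply]
      rw [Submodule.mapQ_apply]
      simpa using hv
    · intro hz
      obtain ⟨v, rfl⟩ := L.mkQ_surjective z
      have : g v ∈ L := by
        have := hz
        rw [LinearMap.mem_ker, Submodule.mkQ_apply, Submodule.mapQ_apply] at this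
        simpa using this
      exact ⟨⟨v, this⟩, rfl⟩
  have hker : LinearMap.ker φ = L.comap (L.comap g).subtype := by
    ext p
    simp [hφ]
  have h1 : Module.finrank K (LinearMap.ker φ) = Module.finrank K L := by
    rw [hker]
    exact (Submodule.comapSubtypeEquivOfLe hg).finrank_eq
  have h2 := LinearMap.finrank_range_add_finrank_ker φ
  rw [hrange, h1] at h2
  exact h2


/-- Let `x` be a nilpotent self-adjoint endomorphism of a `2n`-dimensional
symplectic space `V` whose Jordan type is `λ ∪ λ` (encoded by the kernel-dimension
condition `dim ker(x^k) = 2·Σᵢ min(λᵢ, k)`), and let `F₁ = ℂv₁` with `0 ≠ v₁ ∈ ker x`.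
Let `j₀` be the largest `j` with `v₁ ∈ im(x^(j-1))` and `m̄` maximal with `λ_m̄ = j₀`.
Then the Jordan type of the induced endomorphism of `F₁^⊥/F₁` is `λ' ∪ λ'`, where `λ'`
is obtained from `λ` by decreasing `λ_m̄` by one. -/
theorem jordanType_perp_mod_line
    (V : Type*) [AddCommGroup V] [Module ℂ V] [FiniteDimensional ℂ V]
    (B : LinearMap.BilinForm ℂ V)
    (hskew : ∀ v w : V, B v w = - B w v)
    (hnondeg : ∀ v : V, (∀ w : V, B v w = 0) → v = 0)
    (x : Module.End ℂ V) (hx : IsNilpotent x)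
    (hself : ∀ v w : V, B (x v) w = B v (x w))
    (n : ℕ) (hdim : Module.finrank ℂ V = 2 * n)
    (lam : ℕ → ℕ) (hlam : Antitone lam) (hfin : ∃ K, ∀ i ≥ K, lam i = 0)
    (hjordan : ∀ k : ℕ,
      Module.finrank ℂ (LinearMap.ker (x ^ k)) = 2 * ∑ᶠ i, min (lam i) k)
    (v₁ : V) (hv₁0 : v₁ ≠ 0) (hv₁ : v₁ ∈ LinearMap.ker x)
    (j₀ : ℕ) (hj₀ : 1 ≤ j₀)
    (hmem : v₁ ∈ LinearMap.range (x ^ (j₀ - 1)))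
    (hnotmem : v₁ ∉ LinearMap.range (x ^ j₀))
    (mbar : ℕ) (hmbar : lam mbar = j₀) (hmbarmax : lam (mbar + 1) < j₀)
    -- the perpendicular `F₁^⊥` is `x`-invariant, the line `F₁` sits inside it,
    -- and the induced endomorphism of `F₁^⊥/F₁` is built from these data:
    (hPx : ∀ w ∈ B.orthogonal (Submodule.span ℂ {v₁}), x w ∈
      B.orthogonal (Submodule.span ℂ {v₁}))
    (L : Submodule ℂ (B.orthogonal (Submodule.span ℂ {v₁})))
    (hL : L = (Submodule.span ℂ {v₁}).comap (B.orthogonal (Submodule.span ℂ {v₁})).subtype)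
    (hLmap : L ≤ L.comap (x.restrict hPx)) :
    ∀ k : ℕ,
      Module.finrank ℂ (LinearMap.ker ((Submodule.mapQ L L (x.restrict hPx) hLmap) ^ k)) =
        2 * ∑ᶠ i, min (Function.update lam mbar (lam mbar - 1) i) k := by
  intro k
  -- self-adjointness for powers
  have hselfpow : ∀ (m : ℕ) (v w : V), B ((x ^ m) v) w = B v ((x ^ m) w) := by
    intro m
    induction m with
    | zero => simp
    | succ m ih =>
      intro v w
      rw [pow_succ, Module.End.mul_apply]
      calc B ((x ^ m) (x v)) w = B (x v) ((x ^ m) w) := ih _ _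
        _ = B v (x ((x ^ m) w)) := hself _ _
        _ = B v ((x ^ m) (x w)) := by
              rw [← Module.End.mul_apply, ← Module.End.mul_apply, ← pow_succ', ← pow_succ]
  -- B u (x^m u) = 0
  have hB0 : ∀ (m : ℕ) (u : V), B u ((x ^ m) u) = 0 := by
    intro m u
    have h1 := hselfpow m u u
    have h2 := hskew ((x ^ m) u) u
    linear_combination (h2 - h1) / 2
  -- membership in P
  have hBv : ∀ w : V, w ∈ B.orthogonal (Submodule.span ℂ {v₁}) ↔ B v₁ w = 0 := by
    intro w
    constructor
    · intro h
      exact h v₁ (Submodule.mem_span_singleton_self v₁)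
    · intro hb
      intro nn hn
      obtain ⟨c, rfl⟩ := Submodule.mem_span_singleton.mp hn
      show B (c • v₁) w = 0
      rw [map_smul]
      simp [hb]
  have hv₁P : v₁ ∈ B.orthogonal (Submodule.span ℂ {v₁}) := (hBv v₁).mpr (by
    simpa using hB0 0 v₁)
  have hF₁P : Submodule.span ℂ {v₁} ≤ B.orthogonal (Submodule.span ℂ {v₁}) := by
    rw [Submodule.span_le]
    simpa using hv₁P
  -- antitone range
  have hrangea : ∀ {a b : ℕ}, a ≤ b →
      LinearMap.range (x ^ b) ≤ LinearMap.range (x ^ a) := by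
    intro a b hab
    obtain ⟨c, rfl⟩ := Nat.exists_eq_add_of_le hab
    rw [pow_add, Module.End.mul_eq_comp]
    exact LinearMap.range_comp_le_range _ _
  -- Step A: reduce to a dimension count in V
  have hstepA : Module.finrank ℂ
        (LinearMap.ker ((Submodule.mapQ L L (x.restrict hPx) hLmap) ^ k)) + 1
      = Module.finrank ℂ ↥((Submodule.span ℂ {v₁}).comap (x ^ k)
          ⊓ B.orthogonal (Submodule.span ℂ {v₁})) := by
    rw [← Submodule.mapQ_pow L hLmap k]
    have h1 := finrank_ker_mapQ' L ((x.restrict hPx) ^ k)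
      (L.le_comap_pow_of_le_comap hLmap k)
    have hLrank : Module.finrank ℂ L = 1 := by
      rw [hL, finrank_comap_subtype', inf_eq_left.mpr hF₁P]
      exact finrank_span_singleton hv₁0
    have hcomap : L.comap ((x.restrict hPx) ^ k)
        = ((Submodule.span ℂ {v₁}).comap (x ^ k)).comap
            (B.orthogonal (Submodule.span ℂ {v₁})).subtype := by
      ext p
      have hcoe : (((x.restrict hPx) ^ k) p : V) = (x ^ k) (p : V) := by
        rw [Module.End.pow_restrict]
        rfl
      simp only [Submodule.mem_comap, hL, Submodule.subtype_apply, hcoe]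
    rw [hcomap, finrank_comap_subtype', hLrank] at h1
    exact h1
  suffices hgoal : Module.finrank ℂ ↥((Submodule.span ℂ {v₁}).comap (x ^ k)
        ⊓ B.orthogonal (Submodule.span ℂ {v₁}))
      = 2 * ∑ᶠ i, min (Function.update lam mbar (lam mbar - 1) i) k + 1 by omega
  clear hstepA hLmap hL L hPx hx hdim hlam hmbarmax
  set F₁ : Submodule ℂ V := Submodule.span ℂ {v₁} with hF₁
  set P : Submodule ℂ V := B.orthogonal F₁ with hP
  set C : Submodule ℂ V := F₁.comap (x ^ k) with hC
  -- finsum support control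
  obtain ⟨K, hK⟩ := hfin
  have hsupp1 : (Function.support fun i => min (lam i) k)
      ⊆ ↑(Finset.range (max K (mbar + 1))) := by
    intro i hi
    simp only [Function.mem_support] at hi
    simp only [Finset.coe_range, Set.mem_Iio]
    by_contra h
    push_neg at h
    have : lam i = 0 := hK i (le_trans (le_max_left _ _) h)
    simp [this] at hi
  have hsupp2 : (Function.support fun i => min (Function.update lam mbar (lam mbar - 1) i) k)
      ⊆ ↑(Finset.range (max K (mbar + 1))) := by
    intro i hi
    simp only [Function.mem_support] at hi
    simp only [Finset.coe_range, Set.mem_Iio]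
    by_contra h
    push_neg at h
    have hiK : K ≤ i := le_trans (le_max_left _ _) h
    have himbar : i ≠ mbar := by
      have := le_trans (le_max_right _ _) h; omega
    rw [Function.update_of_ne himbar] at hi
    simp [hK i hiK] at hi
  have hsum1 : ∑ᶠ i, min (lam i) k
      = ∑ i ∈ Finset.range (max K (mbar + 1)), min (lam i) k :=
    finsum_eq_sum_of_support_subset _ hsupp1
  have hsum2 : ∑ᶠ i, min (Function.update lam mbar (lam mbar - 1) i) k
      = ∑ i ∈ Finset.range (max K (mbar + 1)),
          min (Function.update lam mbar (lam mbar - 1) i) k :=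
    finsum_eq_sum_of_support_subset _ hsupp2
  rcases lt_or_ge k j₀ with hkj | hkj
  · -- case k < j₀
    have hsums : ∑ᶠ i, min (Function.update lam mbar (lam mbar - 1) i) k
        = ∑ᶠ i, min (lam i) k := by
      apply finsum_congr
      intro i
      rcases eq_or_ne i mbar with rfl | hne
      · rw [Function.update_self, hmbar]
        omega
      · rw [Function.update_of_ne hne]
    obtain ⟨u₀, hu₀⟩ := hmem
    have hCP : C ≤ P := by
      intro w hw
      obtain ⟨c, hc⟩ := Submodule.mem_span_singleton.mp (Submodule.mem_comap.mp hw)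
      rw [hBv]
      have e1 : B v₁ w = B ((x ^ (j₀ - 1 - k)) u₀) ((x ^ k) w) := by
        rw [← hselfpow, ← Module.End.mul_apply, ← pow_add,
          show k + (j₀ - 1 - k) = j₀ - 1 by omega, hu₀]
      rw [e1, ← hc, map_smul, ← hu₀, hselfpow, ← Module.End.mul_apply, ← pow_add, hB0,
        smul_zero]
    have hCPinf : C ⊓ P = C := inf_eq_left.mpr hCP
    have hv₁range : v₁ ∈ LinearMap.range (x ^ k) := hrangea (by omega) ⟨u₀, hu₀⟩
    have hFC : Module.finrank ℂ C = 2 * ∑ᶠ i, min (lam i) k + 1 := by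
      set φ : C →ₗ[ℂ] V := (x ^ k) ∘ₗ C.subtype with hφ
      have hkerC : LinearMap.ker (x ^ k) ≤ C := by
        intro w hw
        simp only [LinearMap.mem_ker] at hw
        show (x ^ k) w ∈ F₁
        rw [hw]; exact Submodule.zero_mem _
      have hkerφ : LinearMap.ker φ = (LinearMap.ker (x ^ k)).comap C.subtype := by
        ext p; simp [hφ]
      have h1 : Module.finrank ℂ (LinearMap.ker φ) = 2 * ∑ᶠ i, min (lam i) k := by
        rw [hkerφ, finrank_comap_subtype', inf_eq_left.mpr hkerC, hjordan k]
      have hrangeφ : LinearMap.range φ = F₁ := by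
        rw [hφ, LinearMap.range_comp, Submodule.range_subtype, hC, Submodule.map_comap_eq]
        exact inf_eq_right.mpr (by rw [hF₁, Submodule.span_le]; simpa using hv₁range)
      have h2 := LinearMap.finrank_range_add_finrank_ker φ
      rw [hrangeφ, h1, finrank_span_singleton hv₁0] at h2
      omega
    rw [hCPinf, hFC, hsums]
  · -- case j₀ ≤ k
    have hv₁k : v₁ ∉ LinearMap.range (x ^ k) := fun h => hnotmem (hrangea hkj h)
    have hCker : C = LinearMap.ker (x ^ k) := by
      apply le_antisymm
      · intro w hw
        obtain ⟨c, hc⟩ := Submodule.mem_span_singleton.mp (Submodule.mem_comap.mp hw)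
        rcases eq_or_ne c 0 with rfl | hc0
        · simp only [LinearMap.mem_ker]
          rw [← hc, zero_smul]
        · exact absurd ⟨c⁻¹ • w, by
            rw [map_smul, ← hc, smul_smul, inv_mul_cancel₀ hc0, one_smul]⟩ hv₁k
      · intro w hw
        simp only [LinearMap.mem_ker] at hw
        show (x ^ k) w ∈ F₁
        rw [hw]; exact Submodule.zero_mem _
    have hnotle : ¬ LinearMap.ker (x ^ k) ≤ P := by
      intro hle
      apply hv₁k
      have hφ₀ : LinearMap.ker (x ^ k) ≤ LinearMap.ker (B v₁) := by
        intro w hw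
        simpa [LinearMap.mem_ker] using (hBv w).mp (hle hw)
      set g₁ : (LinearMap.range (x ^ k)) →ₗ[ℂ] ℂ :=
        ((LinearMap.ker (x ^ k)).liftQ (B v₁) hφ₀) ∘ₗ
          ((x ^ k).quotKerEquivRange.symm : LinearMap.range (x ^ k) →ₗ[ℂ] _) with hg₁
      obtain ⟨ψ, hψ⟩ := LinearMap.exists_extend g₁
      have hψx : ∀ w : V, ψ ((x ^ k) w) = B v₁ w := by
        intro w
        have h3 : ((x ^ k).quotKerEquivRange.symm)
            ⟨(x ^ k) w, LinearMap.mem_range_self _ w⟩ = Submodule.Quotient.mk w := by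
          rw [LinearEquiv.symm_apply_eq]
          exact Subtype.ext ((x ^ k).quotKerEquivRange_apply_mk w).symm
        have h4 : ψ ((x ^ k) w) = g₁ ⟨(x ^ k) w, LinearMap.mem_range_self _ w⟩ := by
          rw [← hψ]; rfl
        rw [h4, hg₁]
        simp only [LinearMap.comp_apply, LinearEquiv.coe_coe, h3]
        exact Submodule.liftQ_apply _ _ _
      set u : V := ((B.toDual ((LinearMap.IsRefl.nondegenerate_iff_separatingLeft (fun a b h => by rw [hskew, h, neg_zero])).mpr hnondeg : B.Nondegenerate)).symm ψ) with hu
      refine ⟨u, ?_⟩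
      have hz : ∀ w : V, B ((x ^ k) u - v₁) w = 0 := by
        intro w
        rw [map_sub, LinearMap.sub_apply, hselfpow]
        have : B u ((x ^ k) w) = ψ ((x ^ k) w) := by
          rw [hu]
          exact LinearMap.BilinForm.apply_toDual_symm_apply _ _
        rw [this, hψx, sub_self]
      exact sub_eq_zero.mp (hnondeg _ hz)
    obtain ⟨w₀, hw₀k, hw₀P⟩ := SetLike.not_le_iff_exists.mp hnotle
    have hw₀B : B v₁ w₀ ≠ 0 := fun h => hw₀P ((hBv w₀).mpr h)
    have hFK : Module.finrank ℂ ↥(P ⊓ LinearMap.ker (x ^ k)) + 1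
        = 2 * ∑ᶠ i, min (lam i) k := by
      set φ' : (LinearMap.ker (x ^ k)) →ₗ[ℂ] ℂ :=
        (B v₁) ∘ₗ (LinearMap.ker (x ^ k)).subtype with hφ'
      have hker' : LinearMap.ker φ' = P.comap (LinearMap.ker (x ^ k)).subtype := by
        ext p
        simp [hφ', hBv]
      have hsurj : Function.Surjective φ' := by
        intro c
        refine ⟨(c * (B v₁ w₀)⁻¹) • ⟨w₀, hw₀k⟩, ?_⟩
        simp [hφ', smul_eq_mul, mul_assoc, inv_mul_cancel₀ hw₀B]
      have h2 := LinearMap.finrank_range_add_finrank_ker φ'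
      rw [LinearMap.range_eq_top.mpr hsurj, finrank_top, Module.finrank_self,
        hker', finrank_comap_subtype', hjordan k] at h2
      omega
    have hCPP : C ⊓ P = P ⊓ LinearMap.ker (x ^ k) := by rw [hCker, inf_comm]
    rw [hCPP]
    rw [hsum1] at hFK
    rw [hsum2]
    have hmem1 : mbar ∈ Finset.range (max K (mbar + 1)) := by
      simp only [Finset.mem_range]; omega
    have hspl1 : ∑ i ∈ Finset.range (max K (mbar + 1)), min (lam i) k
        = min (lam mbar) k
          + ∑ i ∈ (Finset.range (max K (mbar + 1))).erase mbar, min (lam i) k :=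
      (Finset.add_sum_erase _ _ hmem1).symm
    have hspl2 : ∑ i ∈ Finset.range (max K (mbar + 1)),
          min (Function.update lam mbar (lam mbar - 1) i) k
        = min (lam mbar - 1) k
          + ∑ i ∈ (Finset.range (max K (mbar + 1))).erase mbar, min (lam i) k := by
      rw [← Finset.add_sum_erase _ _ hmem1]
      congr 1
      · rw [Function.update_self]
      · apply Finset.sum_congr rfl
        intro i hi
        rw [Function.update_of_ne (Finset.ne_of_mem_erase hi)]
    rw [hspl1] at hFK
    rw [hspl2]
    have hmink : min (lam mbar) k = j₀ := by rw [hmbar]; omega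
    have hminl : min (lam mbar - 1) k = j₀ - 1 := by rw [hmbar]; omega
    rw [hminl]
    rw [hmink] at hFK
    omega
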